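/- There is no constant C ∈ ℝ such that for all w ∈ FreeGroup (Fin 3) one has FreeGroup.norm w ≤ C · |φ(w)|_S + C, where S = {ū₁, ū₂, ū₃, ū₄} and |·|_S is word length in A_L with respect to S. (That is, the free subgroup Γ_L = φ(FreeGroup (Fin 3)) is not quasi-isometrically embedded in A_L; it is at least quadratically distorted.) -/

import Mathlib

/-- The relator set of the right-angled Artin group of a simple graph `G`:
commutators of pairs of adjacent vertices. -/
def raagRels {V : Type*} (G : SimpleGraph V) : Set (FreeGroup V) :=
  {r | ∃ u v : V, G.Adj u v ∧
    r = FreeGroup.of u * FreeGroup.of v * (FreeGroup.of u)⁻¹ * (FreeGroup.of v)⁻¹}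

/-- The right-angled Artin group of a simple graph `G`. -/
abbrev RAAG {V : Type*} (G : SimpleGraph V) : Type _ :=
  PresentedGroup (raagRels G)

/-- The image `v̄` of a vertex (generator) `v` in the right-angled Artin group. -/
def RAAG.gen {V : Type*} (G : SimpleGraph V) (v : V) : RAAG G :=
  PresentedGroup.of (rels := raagRels G) v

/-- The path graph `L` on the four vertices `u₁ = 0, u₂ = 1, u₃ = 2, u₄ = 3`,
with edges `{u₁,u₂}, {u₂,u₃}, {u₃,u₄}`. -/
abbrev L : SimpleGraph (Fin 4) := SimpleGraph.pathGraph 4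

/-- The right-angled Artin group
`A_L = ⟨u₁,u₂,u₃,u₄ ∣ [u₁,u₂] = [u₂,u₃] = [u₃,u₄] = 1⟩`. -/
abbrev A_L : Type _ := RAAG L

/-- `a = ū₂⁻¹ū₁`. -/
def elt_a : A_L := (RAAG.gen L 1)⁻¹ * RAAG.gen L 0

/-- `x = ū₂⁻¹ū₃`. -/
def elt_x : A_L := (RAAG.gen L 1)⁻¹ * RAAG.gen L 2

/-- `e = ū₃⁻¹ū₄`. -/
def elt_e : A_L := (RAAG.gen L 2)⁻¹ * RAAG.gen L 3

/-- The homomorphism `φ : FreeGroup (Fin 3) →* A_L` with `φ g₀ = a`, `φ g₁ = x`,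
`φ g₂ = e`. -/
def phi : FreeGroup (Fin 3) →* A_L := FreeGroup.lift ![elt_a, elt_x, elt_e]

/-- The standard generating set `S = {ū₁, ū₂, ū₃, ū₄}` of `A_L`. -/
def genSet : Set A_L := {RAAG.gen L 0, RAAG.gen L 1, RAAG.gen L 2, RAAG.gen L 3}

/-- The word length of `g ∈ A_L` with respect to `S`: the least `n` such that `g` is
a product of `n` elements of `S ∪ S⁻¹`. -/
noncomputable def wordLength (g : A_L) : ℕ :=
  sInf {n : ℕ | ∃ l : List A_L,
    l.length = n ∧ (∀ x ∈ l, x ∈ genSet ∪ genSet⁻¹) ∧ l.prod = g}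

namespace Stmt9
abbrev g (i : Fin 4) : A_L := RAAG.gen L i

lemma rel_one {i j : Fin 4} (h : L.Adj i j) :
    g i * g j * (g i)⁻¹ * (g j)⁻¹ = 1 := by
  have hmem : FreeGroup.of i * FreeGroup.of j * (FreeGroup.of i)⁻¹ * (FreeGroup.of j)⁻¹ ∈
      Subgroup.normalClosure (raagRels L) :=
    Subgroup.subset_normalClosure ⟨i, j, h, rfl⟩
  have h1 : PresentedGroup.mk (raagRels L)
      (FreeGroup.of i * FreeGroup.of j * (FreeGroup.of i)⁻¹ * (FreeGroup.of j)⁻¹) = 1 :=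
    (QuotientGroup.eq_one_iff _).mpr hmem
  simpa [RAAG.gen, PresentedGroup.of, map_mul, map_inv] using h1

lemma comm_of_adj {i j : Fin 4} (h : L.Adj i j) : Commute (g i) (g j) := by
  have h1 := rel_one h
  show g i * g j = g j * g i
  calc g i * g j = (g i * g j * (g i)⁻¹ * (g j)⁻¹) * (g j * g i) := by group
  _ = g j * g i := by rw [h1, one_mul]

lemma c01 : Commute (g 0) (g 1) := comm_of_adj (by rw [SimpleGraph.pathGraph_adj]; decide)
lemma c12 : Commute (g 1) (g 2) := comm_of_adj (by rw [SimpleGraph.pathGraph_adj]; decide)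
lemma c23 : Commute (g 2) (g 3) := comm_of_adj (by rw [SimpleGraph.pathGraph_adj]; decide)

lemma c1a : Commute (g 1) elt_a := ((Commute.refl (g 1)).inv_right).mul_right c01.symm
lemma c2e : Commute (g 2) elt_e := ((Commute.refl (g 2)).inv_right).mul_right c23

lemma conj_a (k : ℕ) : (elt_x⁻¹)^k * elt_a * elt_x^k = ((g 2)⁻¹)^k * elt_a * (g 2)^k := by
  induction k with
  | zero => simp
  | succ k ih =>
    have hM : Commute (g 1) (((g 2)⁻¹)^k * elt_a * (g 2)^k) :=
      ((c12.inv_right.pow_right k).mul_right c1a).mul_right (c12.pow_right k)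
    calc (elt_x⁻¹)^(k+1) * elt_a * elt_x^(k+1)
        = elt_x⁻¹ * ((elt_x⁻¹)^k * elt_a * elt_x^k) * elt_x := by group
      _ = elt_x⁻¹ * (((g 2)⁻¹)^k * elt_a * (g 2)^k) * elt_x := by rw [ih]
      _ = (g 2)⁻¹ * (g 1 * (((g 2)⁻¹)^k * elt_a * (g 2)^k) * (g 1)⁻¹) * g 2 := by
          rw [show elt_x = (g 1)⁻¹ * g 2 from rfl]; group
      _ = (g 2)⁻¹ * ((((g 2)⁻¹)^k * elt_a * (g 2)^k) * g 1 * (g 1)⁻¹) * g 2 := by rw [hM.eq]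
      _ = ((g 2)⁻¹)^(k+1) * elt_a * (g 2)^(k+1) := by group

end Stmt9

namespace Stmt9

def blk (k : ℕ) : FreeGroup (Fin 3) :=
  ((FreeGroup.of 1)⁻¹)^k * FreeGroup.of 0 * (FreeGroup.of 1)^k * FreeGroup.of 2

def w (n : ℕ) : FreeGroup (Fin 3) := (blk n)^n

lemma phi_of0 : phi (FreeGroup.of 0) = elt_a := by simp [phi]
lemma phi_of1 : phi (FreeGroup.of 1) = elt_x := by simp [phi]
lemma phi_of2 : phi (FreeGroup.of 2) = elt_e := by simp [phi]

lemma phi_blk (k : ℕ) :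
    phi (blk k) = ((g 2)⁻¹)^k * (elt_a * elt_e) * (g 2)^k := by
  have h1 : phi (blk k) = (elt_x⁻¹)^k * elt_a * elt_x^k * elt_e := by
    simp [blk, map_mul, map_pow, map_inv, phi_of0, phi_of1, phi_of2]
  rw [h1, conj_a k, mul_assoc, ((c2e.pow_left k).eq), ← mul_assoc, ← mul_assoc, mul_assoc _ elt_a elt_e]

lemma phi_w (n : ℕ) :
    phi (w n) = ((g 2)⁻¹)^n * (elt_a * elt_e)^n * (g 2)^n := by
  have : phi (w n) = (((g 2)^n)⁻¹ * (elt_a * elt_e) * (((g 2)^n)⁻¹)⁻¹)^n := by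
    rw [w, map_pow, phi_blk]; rw [inv_pow, inv_inv]
  rw [this, conj_pow, inv_pow, inv_inv]

end Stmt9

namespace Stmt9

lemma prod_join_rep {G : Type*} [Monoid G] (l : List G) (n : ℕ) :
    ((List.replicate n l).flatten).prod = l.prod ^ n := by
  induction n with
  | zero => simp
  | succ n ih => rw [List.replicate_succ, List.flatten_cons, List.prod_append, ih, pow_succ']

def Lst (n : ℕ) : List A_L :=
  List.replicate n (g 2)⁻¹ ++ (List.replicate n [(g 1)⁻¹, g 0, (g 2)⁻¹, g 3]).flatten
    ++ List.replicate n (g 2)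

lemma Lst_length (n : ℕ) : (Lst n).length = 6 * n := by
  simp [Lst, List.length_flatten]
  ring

lemma Lst_prod (n : ℕ) : (Lst n).prod = phi (w n) := by
  have hb : ([(g 1)⁻¹, g 0, (g 2)⁻¹, g 3] : List A_L).prod = elt_a * elt_e := by
    simp [elt_a, elt_e, mul_assoc]
  rw [phi_w, Lst, List.prod_append, List.prod_append, List.prod_replicate,
    List.prod_replicate, prod_join_rep, hb]

lemma Lst_mem (n : ℕ) : ∀ z ∈ Lst n, z ∈ genSet ∪ genSet⁻¹ := by
  intro z hz
  simp only [Lst, List.mem_append, List.mem_replicate, List.mem_flatten] at hz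
  have hg : ∀ i : Fin 4, g i ∈ genSet := by
    intro i; fin_cases i <;> simp [genSet, g]
  have hginv : ∀ i : Fin 4, (g i)⁻¹ ∈ genSet⁻¹ := by
    intro i; simpa [Set.mem_inv] using hg i
  rcases hz with (⟨-, rfl⟩ | ⟨lsub, hl, hzl⟩) | ⟨-, rfl⟩
  · exact Or.inr (hginv 2)
  · rw [hl.2] at hzl
    simp only [List.mem_cons, List.not_mem_nil, or_false] at hzl
    rcases hzl with rfl | rfl | rfl | rfl
    · exact Or.inr (hginv 1)
    · exact Or.inl (hg 0)
    · exact Or.inr (hginv 2)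
    · exact Or.inl (hg 3)
  · exact Or.inl (hg 2)

lemma wl_le (n : ℕ) : wordLength (phi (w n)) ≤ 6 * n :=
  Nat.sInf_le ⟨Lst n, Lst_length n, Lst_mem n, Lst_prod n⟩

end Stmt9

namespace Stmt9

def R (p q : Fin 3 × Bool) : Prop := ¬(p.1 = q.1 ∧ p.2 = !q.2)

def Bw (n : ℕ) : List (Fin 3 × Bool) :=
  List.replicate n ((1:Fin 3), false) ++
    ((0:Fin 3), true) :: (List.replicate n ((1:Fin 3), true) ++ [((2:Fin 3), true)])

lemma mem_Bw {n : ℕ} {y : Fin 3 × Bool} (hy : y ∈ Bw n) :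
    y = ((1:Fin 3), false) ∨ y = ((0:Fin 3), true) ∨ y = ((1:Fin 3), true) ∨
      y = ((2:Fin 3), true) := by
  simp only [Bw, List.mem_append, List.mem_cons, List.mem_replicate,
    List.mem_singleton] at hy
  tauto

lemma chain_Bw (n : ℕ) : List.Chain' R (Bw n) := by
  have hrep : ∀ (b : Bool) (i : Fin 3) (m : ℕ), List.Chain' R (List.replicate m (i, b)) := by
    intro b i m
    exact List.isChain_replicate_of_rel m (by simp [R])
  apply List.IsChain.append (hrep false 1 n)
  · rw [List.isChain_cons]
    constructor
    · intro y hy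
      have := List.mem_of_mem_head? hy
      simp only [List.mem_append, List.mem_replicate, List.mem_singleton] at this
      rcases this with ⟨-, rfl⟩ | rfl <;> simp [R]
    · apply List.IsChain.append (hrep true 1 n) (List.isChain_singleton _)
      intro x hx y hy
      have hx' := List.eq_of_mem_replicate (List.mem_of_mem_getLast? hx)
      have hy' := List.mem_singleton.mp (List.mem_of_mem_head? hy)
      subst hx' hy'; simp [R]
  · intro x hx y hy
    have hx' := List.eq_of_mem_replicate (List.mem_of_mem_getLast? hx)
    have hy' : y = ((0:Fin 3), true) := by simpa [eq_comm] using hy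
    subst hx' hy'; simp [R]

lemma getLast_Bw (n : ℕ) : (Bw n).getLast? = some ((2:Fin 3), true) := by
  have : Bw n = (List.replicate n ((1:Fin 3), false) ++
      ((0:Fin 3), true) :: List.replicate n ((1:Fin 3), true)) ++ [((2:Fin 3), true)] := by
    simp [Bw]
  rw [this, List.getLast?_concat]

lemma R_last {n : ℕ} {y : Fin 3 × Bool} (hy : y ∈ Bw n) : R ((2:Fin 3), true) y := by
  rcases mem_Bw hy with rfl | rfl | rfl | rfl <;> simp [R]

def Jl (n : ℕ) : List (Fin 3 × Bool) := (List.replicate n (Bw n)).flatten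

lemma chain_Jl_aux (n m : ℕ) : List.Chain' R ((List.replicate m (Bw n)).flatten) := by
  induction m with
  | zero => exact List.isChain_nil
  | succ m ih =>
    rw [List.replicate_succ, List.flatten_cons]
    apply List.IsChain.append (chain_Bw n) ih
    intro x hx y hy
    rw [getLast_Bw n] at hx
    have hx' : x = ((2:Fin 3), true) := by simpa [eq_comm] using hx
    subst hx'
    have hy' := List.mem_of_mem_head? hy
    rw [List.mem_flatten] at hy'
    obtain ⟨l, hl, hyl⟩ := hy'
    rw [List.eq_of_mem_replicate hl] at hyl
    exact R_last hyl

lemma chain_Jl (n : ℕ) : List.Chain' R (Jl n) := chain_Jl_aux n n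

lemma reduce_eq_self : ∀ {Lw : List (Fin 3 × Bool)}, List.Chain' R Lw →
    FreeGroup.reduce Lw = Lw := by
  intro Lw
  induction Lw with
  | nil => intro _; rfl
  | cons x t ih =>
    intro h
    rw [FreeGroup.reduce.cons, ih h.tail]
    cases t with
    | nil => rfl
    | cons y s =>
      have hR : ¬(x.1 = y.1 ∧ x.2 = !y.2) := (List.isChain_cons_cons.mp h).1
      show (if x.1 = y.1 ∧ x.2 = !y.2 then s else x :: y :: s) = x :: y :: s
      rw [if_neg hR]

end Stmt9

namespace Stmt9

lemma mk_single_pow (x : Fin 3) (b : Bool) (n : ℕ) :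
    (FreeGroup.mk [(x, b)]) ^ n = FreeGroup.mk (List.replicate n (x, b)) := by
  induction n with
  | zero => simp [← FreeGroup.one_eq_mk]
  | succ n ih => rw [pow_succ', ih, FreeGroup.mul_mk]; rfl

lemma inv_of (x : Fin 3) : (FreeGroup.of x)⁻¹ = FreeGroup.mk [(x, false)] := by
  rw [show FreeGroup.of x = FreeGroup.mk [(x, true)] from rfl, FreeGroup.inv_mk]
  rfl

lemma mk_Bw (n : ℕ) : FreeGroup.mk (Bw n) = blk n := by
  rw [blk, inv_of, mk_single_pow,
    show FreeGroup.of (0:Fin 3) = FreeGroup.mk [((0:Fin 3), true)] from rfl,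
    show FreeGroup.of (1:Fin 3) = FreeGroup.mk [((1:Fin 3), true)] from rfl,
    show FreeGroup.of (2:Fin 3) = FreeGroup.mk [((2:Fin 3), true)] from rfl,
    mk_single_pow, FreeGroup.mul_mk, FreeGroup.mul_mk, FreeGroup.mul_mk]
  congr 1
  simp [Bw]

lemma mk_Jl (n : ℕ) : FreeGroup.mk (Jl n) = w n := by
  rw [Jl, w, ← mk_Bw]
  generalize Bw n = lw
  induction n with
  | zero => simp [← FreeGroup.one_eq_mk]
  | succ n ih => rw [List.replicate_succ, List.flatten_cons, pow_succ', ← ih, FreeGroup.mul_mk]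

lemma norm_w (n : ℕ) : FreeGroup.norm (w n) = n * (2 * n + 2) := by
  rw [← mk_Jl, FreeGroup.norm, FreeGroup.toWord_mk, reduce_eq_self (chain_Jl n)]
  have hlen : (Bw n).length = 2 * n + 2 := by simp [Bw]; ring
  rw [Jl, List.length_flatten, List.map_replicate, hlen, List.sum_replicate, smul_eq_mul]

end Stmt9

theorem stmt_9 :
    ¬ ∃ C : ℝ, ∀ w : FreeGroup (Fin 3),
      (FreeGroup.norm w : ℝ) ≤ C * (wordLength (phi w) : ℝ) + C := by
  rintro ⟨C, hC⟩
  have hC0 : 0 ≤ C := by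
    by_contra h
    push_neg at h
    have h1 := hC (FreeGroup.of 0)
    rw [FreeGroup.norm_of] at h1
    have h2 : (0:ℝ) ≤ (wordLength (phi (FreeGroup.of 0)) : ℝ) := Nat.cast_nonneg _
    nlinarith
  set n : ℕ := ⌈4 * C⌉₊ + 1 with hn
  have hn1 : (1:ℝ) ≤ (n:ℝ) := by
    have : 1 ≤ n := Nat.le_add_left 1 _
    exact_mod_cast this
  have hn4 : 4 * C ≤ (n:ℝ) := by
    refine le_trans (Nat.le_ceil _) ?_
    exact_mod_cast Nat.le_succ _
  have h1 := hC (Stmt9.w n)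
  rw [Stmt9.norm_w n] at h1
  have h2 : (wordLength (phi (Stmt9.w n)) : ℝ) ≤ 6 * n := by
    exact_mod_cast Stmt9.wl_le n
  have h3 : C * (wordLength (phi (Stmt9.w n)) : ℝ) ≤ C * (6 * n) :=
    mul_le_mul_of_nonneg_left h2 hC0
  have hcast : ((n * (2 * n + 2) : ℕ) : ℝ) = (n:ℝ) * (2 * n + 2) := by push_cast; ring
  rw [hcast] at h1
  nlinarith [mul_le_mul_of_nonneg_right hn4 (le_trans zero_le_one hn1)]
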